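/- On R^6 with the Poisson brackets of A_{6,25} (P: P^{13}=p13, P^{24}=p24, P^{26}=p24 x5, P^{36}=p36, P^{56}=p56; P': P'^{13}=a31 x1, P'^{24}=b42 x2+b44 x4, P'^{26}=(b42 x2+b44 x4)x5, P'^{56}=e65 x5), assume p13 p24 p56 ≠ 0. Then with u = a31 x1/p13, v = (b42 x2 + b44 x4)/p24, w = e65 x5/p56, the functions H1 = u+v+w, H2 = (u^2+v^2+w^2)/2, H3 = (u^3+v^3+w^3)/3 are pairwise in involution with respect to both brackets. -/

import Mathlib

open scoped BigOperators

noncomputable def pd {m : ℕ} (μ : Fin m) (f : (Fin m → ℝ) → ℝ) (x : Fin m → ℝ) : ℝ :=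
  fderiv ℝ f x (Pi.single μ 1)

/-- Poisson bracket associated to a bivector field `P`. -/
noncomputable def pbrk {m : ℕ} (P : (Fin m → ℝ) → Fin m → Fin m → ℝ)
    (f g : (Fin m → ℝ) → ℝ) (x : Fin m → ℝ) : ℝ :=
  ∑ μ, ∑ ν, P x μ ν * pd μ f x * pd ν g x

/-- Schouten bracket `[P,P]^{λμν}`. -/
noncomputable def schouten {m : ℕ} (P : (Fin m → ℝ) → Fin m → Fin m → ℝ)
    (l μ ν : Fin m) (x : Fin m → ℝ) : ℝ :=
  ∑ ρ, (P x ρ l * pd ρ (fun y => P y μ ν) x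
      + P x ρ ν * pd ρ (fun y => P y l μ) x
      + P x ρ μ * pd ρ (fun y => P y ν l) x)

/-- Mixed Schouten bracket `[P,Q]^{λμν}`. -/
noncomputable def schoutenMixed {m : ℕ} (P Q : (Fin m → ℝ) → Fin m → Fin m → ℝ)
    (l μ ν : Fin m) (x : Fin m → ℝ) : ℝ :=
  ∑ ρ, (P x ρ l * pd ρ (fun y => Q y μ ν) x + Q x ρ l * pd ρ (fun y => P y μ ν) x
      + P x ρ ν * pd ρ (fun y => Q y l μ) x + Q x ρ ν * pd ρ (fun y => P y l μ) x
      + P x ρ μ * pd ρ (fun y => Q y ν l) x + Q x ρ μ * pd ρ (fun y => P y ν l) x)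

/-- The Poisson bivector `P` on the nilpotent group `A_{6,25}`. -/
noncomputable def P625 (p13 p24 p36 p56 : ℝ) : (Fin 6 → ℝ) → Fin 6 → Fin 6 → ℝ :=
  fun x μ ν =>
    let C := p24 * x 4
    !![0, 0, p13, 0, 0, 0;
       0, 0, 0, p24, 0, C;
       -p13, 0, 0, 0, 0, p36;
       0, -p24, 0, 0, 0, 0;
       0, 0, 0, 0, 0, p56;
       0, -C, -p36, 0, -p56, 0] μ ν

/-- The Poisson bivector `P'` on the nilpotent group `A_{6,25}`. -/
noncomputable def P625' (a31 b42 b44 e65 : ℝ) : (Fin 6 → ℝ) → Fin 6 → Fin 6 → ℝ :=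
  fun x μ ν =>
    let A := a31 * x 0
    let B := b42 * x 1 + b44 * x 3
    let C := b42 * x 1 * x 4 + b44 * x 3 * x 4
    let E := e65 * x 4
    !![0, 0, A, 0, 0, 0;
       0, 0, 0, B, 0, C;
       -A, 0, 0, 0, 0, 0;
       0, -B, 0, 0, 0, 0;
       0, 0, 0, 0, 0, E;
       0, -C, 0, 0, -E, 0] μ ν

section AuxPD

private lemma pdH0' (a31 p13 b42 b44 p24 e65 p56 : ℝ) (μ : Fin 6) (x : Fin 6 → ℝ) :
    pd μ (fun x : Fin 6 → ℝ => a31 * x 0 / p13 + (b42 * x 1 + b44 * x 3) / p24 + e65 * x 4 / p56) x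
    = ![a31/p13, b42/p24, 0, b44/p24, e65/p56, 0] μ := by
  have h0 := (ContinuousLinearMap.proj (R := ℝ) (φ := fun _ : Fin 6 => ℝ) 0).hasFDerivAt (x := x)
  have h1 := (ContinuousLinearMap.proj (R := ℝ) (φ := fun _ : Fin 6 => ℝ) 1).hasFDerivAt (x := x)
  have h3 := (ContinuousLinearMap.proj (R := ℝ) (φ := fun _ : Fin 6 => ℝ) 3).hasFDerivAt (x := x)
  have h4 := (ContinuousLinearMap.proj (R := ℝ) (φ := fun _ : Fin 6 => ℝ) 4).hasFDerivAt (x := x)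
  have hu := h0.const_mul (p13⁻¹ * a31)
  have hv := (h1.const_mul (p24⁻¹ * b42)).add (h3.const_mul (p24⁻¹ * b44))
  have hw := h4.const_mul (p56⁻¹ * e65)
  have h := (hu.add hv).add hw
  simp only [ContinuousLinearMap.proj_apply, Pi.add_def, Pi.mul_def] at h
  rw [show (fun x : Fin 6 → ℝ => a31 * x 0 / p13 + (b42 * x 1 + b44 * x 3) / p24 + e65 * x 4 / p56)
      = fun x : Fin 6 → ℝ => (p13⁻¹ * a31 * x 0 + (p24⁻¹ * b42 * x 1 + p24⁻¹ * b44 * x 3))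
        + p56⁻¹ * e65 * x 4 from funext fun x => by ring]
  rw [pd, h.fderiv]
  fin_cases μ <;>
    · simp [ContinuousLinearMap.proj_apply, Pi.single_apply, Matrix.cons_val_succ]
      try rfl
      try ring

private lemma pdH1' (a31 p13 b42 b44 p24 e65 p56 : ℝ) (μ : Fin 6) (x : Fin 6 → ℝ) :
    pd μ (fun x : Fin 6 → ℝ => ((a31 * x 0 / p13) ^ 2 + ((b42 * x 1 + b44 * x 3) / p24) ^ 2
        + (e65 * x 4 / p56) ^ 2) / 2) x
    = ![(a31 * x 0 / p13) * (a31/p13), ((b42 * x 1 + b44 * x 3) / p24) * (b42/p24), 0,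
        ((b42 * x 1 + b44 * x 3) / p24) * (b44/p24), (e65 * x 4 / p56) * (e65/p56), 0] μ := by
  have h0 := (ContinuousLinearMap.proj (R := ℝ) (φ := fun _ : Fin 6 => ℝ) 0).hasFDerivAt (x := x)
  have h1 := (ContinuousLinearMap.proj (R := ℝ) (φ := fun _ : Fin 6 => ℝ) 1).hasFDerivAt (x := x)
  have h3 := (ContinuousLinearMap.proj (R := ℝ) (φ := fun _ : Fin 6 => ℝ) 3).hasFDerivAt (x := x)
  have h4 := (ContinuousLinearMap.proj (R := ℝ) (φ := fun _ : Fin 6 => ℝ) 4).hasFDerivAt (x := x)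
  have hu := h0.const_mul (p13⁻¹ * a31)
  have hv := (h1.const_mul (p24⁻¹ * b42)).add (h3.const_mul (p24⁻¹ * b44))
  have hw := h4.const_mul (p56⁻¹ * e65)
  have h := ((((hu.mul hu).add (hv.mul hv)).add (hw.mul hw)).const_mul (2⁻¹ : ℝ))
  simp only [ContinuousLinearMap.proj_apply, Pi.add_def, Pi.mul_def] at h
  rw [show (fun x : Fin 6 → ℝ => ((a31 * x 0 / p13) ^ 2 + ((b42 * x 1 + b44 * x 3) / p24) ^ 2
        + (e65 * x 4 / p56) ^ 2) / 2)
      = fun x : Fin 6 → ℝ => (2⁻¹ : ℝ) *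
        ((p13⁻¹ * a31 * x 0) * (p13⁻¹ * a31 * x 0)
        + (p24⁻¹ * b42 * x 1 + p24⁻¹ * b44 * x 3) * (p24⁻¹ * b42 * x 1 + p24⁻¹ * b44 * x 3)
        + (p56⁻¹ * e65 * x 4) * (p56⁻¹ * e65 * x 4)) from funext fun x => by ring]
  rw [pd, h.fderiv]
  fin_cases μ <;>
    · simp [ContinuousLinearMap.proj_apply, Pi.single_apply, Matrix.cons_val_succ]
      try rfl
      try ring

private lemma pdH2' (a31 p13 b42 b44 p24 e65 p56 : ℝ) (μ : Fin 6) (x : Fin 6 → ℝ) :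
    pd μ (fun x : Fin 6 → ℝ => ((a31 * x 0 / p13) ^ 3 + ((b42 * x 1 + b44 * x 3) / p24) ^ 3
        + (e65 * x 4 / p56) ^ 3) / 3) x
    = ![(a31 * x 0 / p13) ^ 2 * (a31/p13), ((b42 * x 1 + b44 * x 3) / p24) ^ 2 * (b42/p24), 0,
        ((b42 * x 1 + b44 * x 3) / p24) ^ 2 * (b44/p24), (e65 * x 4 / p56) ^ 2 * (e65/p56), 0] μ := by
  have h0 := (ContinuousLinearMap.proj (R := ℝ) (φ := fun _ : Fin 6 => ℝ) 0).hasFDerivAt (x := x)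
  have h1 := (ContinuousLinearMap.proj (R := ℝ) (φ := fun _ : Fin 6 => ℝ) 1).hasFDerivAt (x := x)
  have h3 := (ContinuousLinearMap.proj (R := ℝ) (φ := fun _ : Fin 6 => ℝ) 3).hasFDerivAt (x := x)
  have h4 := (ContinuousLinearMap.proj (R := ℝ) (φ := fun _ : Fin 6 => ℝ) 4).hasFDerivAt (x := x)
  have hu := h0.const_mul (p13⁻¹ * a31)
  have hv := (h1.const_mul (p24⁻¹ * b42)).add (h3.const_mul (p24⁻¹ * b44))
  have hw := h4.const_mul (p56⁻¹ * e65)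
  have h := (((((hu.mul hu).mul hu).add ((hv.mul hv).mul hv)).add
      ((hw.mul hw).mul hw)).const_mul (3⁻¹ : ℝ))
  simp only [ContinuousLinearMap.proj_apply, Pi.add_def, Pi.mul_def] at h
  rw [show (fun x : Fin 6 → ℝ => ((a31 * x 0 / p13) ^ 3 + ((b42 * x 1 + b44 * x 3) / p24) ^ 3
        + (e65 * x 4 / p56) ^ 3) / 3)
      = fun x : Fin 6 → ℝ => (3⁻¹ : ℝ) *
        ((p13⁻¹ * a31 * x 0) * (p13⁻¹ * a31 * x 0) * (p13⁻¹ * a31 * x 0)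
        + (p24⁻¹ * b42 * x 1 + p24⁻¹ * b44 * x 3) * (p24⁻¹ * b42 * x 1 + p24⁻¹ * b44 * x 3)
            * (p24⁻¹ * b42 * x 1 + p24⁻¹ * b44 * x 3)
        + (p56⁻¹ * e65 * x 4) * (p56⁻¹ * e65 * x 4) * (p56⁻¹ * e65 * x 4))
        from funext fun x => by ring]
  rw [pd, h.fderiv]
  fin_cases μ <;>
    · simp [ContinuousLinearMap.proj_apply, Pi.single_apply, Matrix.cons_val_succ]
      try rfl
      try ring

private lemma vec3_mk0 {α : Type*} (a b c : α) (h : 0 < 3) : ![a,b,c] (⟨0, h⟩ : Fin 3) = a := rfl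
private lemma vec3_mk1 {α : Type*} (a b c : α) (h : 1 < 3) : ![a,b,c] (⟨1, h⟩ : Fin 3) = b := rfl
private lemma vec3_mk2 {α : Type*} (a b c : α) (h : 2 < 3) : ![a,b,c] (⟨2, h⟩ : Fin 3) = c := rfl

private lemma vec6_at0' {α : Type*} (a b c d e f : α) : ![a,b,c,d,e,f] (0 : Fin 6) = a := rfl
private lemma vec6_at1' {α : Type*} (a b c d e f : α) : ![a,b,c,d,e,f] (1 : Fin 6) = b := rfl
private lemma vec6_at2' {α : Type*} (a b c d e f : α) : ![a,b,c,d,e,f] (2 : Fin 6) = c := rfl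
private lemma vec6_at3' {α : Type*} (a b c d e f : α) : ![a,b,c,d,e,f] (3 : Fin 6) = d := rfl
private lemma vec6_at4' {α : Type*} (a b c d e f : α) : ![a,b,c,d,e,f] (4 : Fin 6) = e := rfl
private lemma vec6_at5' {α : Type*} (a b c d e f : α) : ![a,b,c,d,e,f] (5 : Fin 6) = f := rfl

end AuxPD

set_option maxHeartbeats 1600000 in
theorem A625_bi_involution (p13 p24 p36 p56 a31 b42 b44 e65 : ℝ)
    (hne : p13 * p24 * p56 ≠ 0) :
    let u : (Fin 6 → ℝ) → ℝ := fun x => a31 * x 0 / p13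
    let v : (Fin 6 → ℝ) → ℝ := fun x => (b42 * x 1 + b44 * x 3) / p24
    let w : (Fin 6 → ℝ) → ℝ := fun x => e65 * x 4 / p56
    let H : Fin 3 → (Fin 6 → ℝ) → ℝ :=
      ![fun x => u x + v x + w x,
        fun x => ((u x) ^ 2 + (v x) ^ 2 + (w x) ^ 2) / 2,
        fun x => ((u x) ^ 3 + (v x) ^ 3 + (w x) ^ 3) / 3]
    ∀ i j : Fin 3, ∀ x,
      pbrk (P625 p13 p24 p36 p56) (H i) (H j) x = 0 ∧
      pbrk (P625' a31 b42 b44 e65) (H i) (H j) x = 0 := by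
  intro u v w H i j x
  fin_cases i <;> fin_cases j <;>
    · constructor <;>
      · simp only [H, u, v, w, vec3_mk0, vec3_mk1, vec3_mk2]
        rw [pbrk]
        simp only [Fin.sum_univ_six, pdH0', pdH1', pdH2']
        simp only [P625, P625', Matrix.of_apply, vec6_at0', vec6_at1', vec6_at2', vec6_at3',
          vec6_at4', vec6_at5']
        ring
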